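/- arXiv:1711.07117 — 4 statements merged into one kernel-verified Lean document; each statement's English description precedes it below -/
import Mathlib

section
/- Fix θ ∈ [0, π/2]. Then ‖T x‖ = (cos θ)·‖x‖ holds for every x ∈ W if and only if T(T x) = -(cos θ)²·x holds for every x ∈ W. In other words, W is pointwise slant with slant angle θ if and only if T² = -(cos² θ)·id on W (the Chen–Garay characterization of pointwise slant subspaces, stated at a single point). -/
open Real RealInnerProductSpace

/-- **Chen–Garay characterization of pointwise slant subspaces (at a single point).**
Fix `θ ∈ [0, π/2]`.  Then `‖T x‖ = (cos θ)·‖x‖` for every `x ∈ W` if and only if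
`T (T x) = -(cos θ)² • x` for every `x ∈ W`, where `T x = P_W (J x)` is the tangential
part of `J x`. -/
theorem pointwise_slant_iff_Tsq_eq_neg_cos_sq
    {V : Type*} [NormedAddCommGroup V] [InnerProductSpace ℝ V]
    (J : V →ₗᵢ[ℝ] V) (hJsurj : Function.Surjective J)
    (hJ2 : ∀ x : V, J (J x) = -x)
    (W : Submodule ℝ V) [FiniteDimensional ℝ W]
    (T : V → V) (hT : ∀ x : V, T x = (Submodule.orthogonalProjectionOnto W (J x) : V))
    (θ : ℝ) (hθ : θ ∈ Set.Icc 0 (π / 2)) :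
    (∀ x ∈ W, ‖T x‖ = Real.cos θ * ‖x‖) ↔
      (∀ x ∈ W, T (T x) = (-(Real.cos θ ^ 2)) • x) := by
  set c : ℝ := Real.cos θ with hc
  have hc0 : 0 ≤ c := Real.cos_nonneg_of_mem_Icc
    ⟨by linarith [hθ.1, Real.pi_pos], hθ.2⟩
  have hTmem : ∀ x : V, T x ∈ W := by
    intro x; rw [hT]; exact (Submodule.orthogonalProjectionOnto W (J x)).2
  -- projection is "self-adjoint" against members of W
  have hproj : ∀ (u y : V), y ∈ W →
      ⟪(Submodule.orthogonalProjectionOnto W u : V), y⟫ = ⟪u, y⟫ := by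
    intro u y hy
    have h0 : ⟪u - (Submodule.orthogonalProjectionOnto W u : V), y⟫ = 0 :=
      W.starProjection_inner_eq_zero u y hy
    rw [inner_sub_left] at h0
    linarith
  -- J is skew
  have hJskew : ∀ x y : V, ⟪J x, y⟫ = - ⟪x, J y⟫ := by
    intro x y
    have := J.inner_map_map x (J y)
    rw [hJ2, inner_neg_right] at this
    linarith
  -- T is skew on W
  have hskew : ∀ x y : V, x ∈ W → y ∈ W → ⟪T x, y⟫ = - ⟪x, T y⟫ := by
    intro x y hx hy
    have h1 : ⟪T x, y⟫ = ⟪J x, y⟫ := by rw [hT]; exact hproj _ _ hy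
    have h2 : ⟪T y, x⟫ = ⟪J y, x⟫ := by rw [hT]; exact hproj _ _ hx
    have h3 : ⟪x, J y⟫ = ⟪x, T y⟫ := by
      have c1 := real_inner_comm x (J y)
      have c2 := real_inner_comm x (T y)
      linarith
    rw [h1, hJskew, h3]
  have hTadd : ∀ x y : V, T (x + y) = T x + T y := by
    intro x y; simp [hT, map_add]
  constructor
  · intro h x hx
    -- polarization: ⟪T x, T y⟫ = c² ⟪x, y⟫ on W
    have hTT : ∀ x y : V, x ∈ W → y ∈ W → ⟪T x, T y⟫ = c ^ 2 * ⟪x, y⟫ := by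
      intro x y hx hy
      have e1 : ‖T (x + y)‖ = c * ‖x + y‖ := h _ (W.add_mem hx hy)
      have e2 : ‖T x‖ = c * ‖x‖ := h x hx
      have e3 : ‖T y‖ = c * ‖y‖ := h y hy
      have p1 := norm_add_sq_real (T x) (T y)
      have p2 := norm_add_sq_real x y
      rw [← hTadd, e1] at p1
      rw [e2, e3] at p1
      nlinarith [p1, p2]
    have hz : T (T x) + (c ^ 2) • x = 0 := by
      have hzW : T (T x) + (c ^ 2) • x ∈ W :=
        W.add_mem (hTmem _) (W.smul_mem _ hx)
      have horth : ∀ y ∈ W, ⟪T (T x) + (c ^ 2) • x, y⟫ = 0 := by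
        intro y hy
        rw [inner_add_left, real_inner_smul_left,
          hskew _ _ (hTmem x) hy, hTT _ _ hx hy]
        ring
      have := horth _ hzW
      exact inner_self_eq_zero.mp this
    rw [neg_smul]
    exact eq_neg_of_add_eq_zero_left hz
  · intro h x hx
    have hsq : ‖T x‖ ^ 2 = (c * ‖x‖) ^ 2 := by
      have h1 : ⟪T x, T x⟫ = - ⟪x, T (T x)⟫ := hskew x (T x) hx (hTmem x)
      rw [h x hx, inner_smul_right] at h1
      have h2 := real_inner_self_eq_norm_sq (T x)
      have h3 := real_inner_self_eq_norm_sq x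
      nlinarith [h1, h2, h3]
    have hn1 : 0 ≤ ‖T x‖ := norm_nonneg _
    have hn2 : 0 ≤ c * ‖x‖ := mul_nonneg hc0 (norm_nonneg _)
    nlinarith [hsq, hn1, hn2]
end

section
/- Let D be a subspace of W and let P denote the orthogonal projection of V onto D. Then there exists a constant λ ∈ [0, 1] such that (P∘T)((P∘T) x) = -λ·x for every x ∈ D if and only if there exists θ ∈ [0, π/2] such that ‖P(J x)‖ = (cos θ)·‖x‖ for every x ∈ D; moreover, in this case λ = cos² θ. (Characterization of pointwise slant distributions: a distribution D contained in the tangent space W is pointwise slant with slant function value θ exactly when (PT)² = -(cos² θ)·id on D.) -/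
open Real RealInnerProductSpace

/-- **Characterization of pointwise slant distributions.**
Let `D ≤ W` and let `P` be the orthogonal projection onto `D`.  Then there is a constant
`λ ∈ [0,1]` with `(P∘T)((P∘T) x) = -λ • x` for all `x ∈ D` iff there is `θ ∈ [0, π/2]`
with `‖P (J x)‖ = (cos θ)·‖x‖` for all `x ∈ D`; moreover in that case `λ = cos² θ`. -/
theorem pointwise_slant_distribution_characterization
    {V : Type*} [NormedAddCommGroup V] [InnerProductSpace ℝ V]
    (J : V →ₗᵢ[ℝ] V) (hJsurj : Function.Surjective J)
    (hJ2 : ∀ x : V, J (J x) = -x)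
    (W : Submodule ℝ V) [FiniteDimensional ℝ W]
    (T : V → V) (hT : ∀ x : V, T x = (W.orthogonalProjection (J x) : V))
    (D : Submodule ℝ V) [FiniteDimensional ℝ D] (hD : D ≤ W)
    (PT : V → V) (hPT : ∀ x : V, PT x = (D.orthogonalProjection (T x) : V)) :
    ((∃ l ∈ Set.Icc (0 : ℝ) 1, ∀ x ∈ D, PT (PT x) = (-l) • x) ↔
      (∃ θ ∈ Set.Icc 0 (π / 2),
        ∀ x ∈ D, ‖(D.orthogonalProjection (J x) : V)‖ = Real.cos θ * ‖x‖)) ∧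
    (∀ l ∈ Set.Icc (0 : ℝ) 1, (∀ x ∈ D, PT (PT x) = (-l) • x) →
      ∃ θ ∈ Set.Icc 0 (π / 2),
        (∀ x ∈ D, ‖(D.orthogonalProjection (J x) : V)‖ = Real.cos θ * ‖x‖) ∧
          l = Real.cos θ ^ 2) := by
  -- The operator A = P_D ∘ J
  set A : V → V := fun x => (D.orthogonalProjection (J x) : V) with hA
  -- PT agrees with A
  have hPTA : ∀ x : V, PT x = A x := by
    intro x
    rw [hPT, hT, hA]
    have := Submodule.orthogonalProjectionOnto_starProjection_of_le hD (J x)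
    exact congrArg Subtype.val this
  -- inner product of projection with member of D
  have hproj : ∀ (x y : V), y ∈ D → ⟪(D.orthogonalProjection x : V), y⟫ = ⟪x, y⟫ := by
    intro x y hy
    have h0 : ⟪x - (D.orthogonalProjection x : V), y⟫ = 0 :=
      Submodule.inner_left_of_mem_orthogonal hy (Submodule.sub_starProjection_mem_orthogonal (K := D) x)
    rw [inner_sub_left] at h0
    linarith
  -- J is skew-adjoint
  have hskew : ∀ x y : V, ⟪J x, y⟫ = -⟪x, J y⟫ := by
    intro x y
    have : ⟪J x, J (J y)⟫ = ⟪x, J y⟫ := J.inner_map_map x (J y)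
    rw [hJ2 y, inner_neg_right] at this
    linarith
  -- A is additive and homogeneous (inherited from linearity)
  have hAadd : ∀ x y : V, A (x + y) = A x + A y := by
    intro x y; simp [hA, map_add]
  -- key inner product identity: ⟪A (A x), y⟫ = -⟪A x, A y⟫ for x y ∈ D
  have hkey : ∀ x y : V, x ∈ D → y ∈ D → ⟪A (A x), y⟫ = -⟪A x, A y⟫ := by
    intro x y hx hy
    rw [show A (A x) = (D.orthogonalProjection (J (A x)) : V) from rfl]
    rw [hproj _ _ hy, hskew]
    congr 1
    have h2 : ⟪A x, J y - (D.orthogonalProjection (J y) : V)⟫ = 0 := by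
      apply Submodule.inner_right_of_mem_orthogonal (Submodule.coe_mem _)
      exact Submodule.sub_starProjection_mem_orthogonal (K := D) (J y)
    rw [inner_sub_right] at h2
    have : ⟪A x, (D.orthogonalProjection (J y) : V)⟫ = ⟪A x, J y⟫ := by linarith
    rw [← this]
  -- quadratic form: ⟪A (A x), x⟫ = -‖A x‖² for x ∈ D
  have hquad : ∀ x : V, x ∈ D → ⟪A (A x), x⟫ = -(‖A x‖ ^ 2) := by
    intro x hx
    rw [hkey x x hx hx, real_inner_self_eq_norm_sq]
  have hAmem : ∀ x : V, A x ∈ D := fun x => Submodule.coe_mem _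
  -- part 2: from l get θ
  have part2 : ∀ l ∈ Set.Icc (0 : ℝ) 1, (∀ x ∈ D, PT (PT x) = (-l) • x) →
      ∃ θ ∈ Set.Icc 0 (π / 2),
        (∀ x ∈ D, ‖(D.orthogonalProjection (J x) : V)‖ = Real.cos θ * ‖x‖) ∧
          l = Real.cos θ ^ 2 := by
    intro l hl hcond
    obtain ⟨hl0, hl1⟩ := hl
    refine ⟨Real.arccos (Real.sqrt l), ⟨Real.arccos_nonneg _, ?_⟩, ?_, ?_⟩
    · exact Real.arccos_le_pi_div_two.mpr (Real.sqrt_nonneg l)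
    · intro x hx
      have hc : Real.cos (Real.arccos (Real.sqrt l)) = Real.sqrt l :=
        Real.cos_arccos (le_trans (by norm_num) (Real.sqrt_nonneg l)) (Real.sqrt_le_one.mpr hl1)
      rw [hc]
      have h1 : A (A x) = (-l) • x := by
        rw [← hPTA, ← hPTA]; exact hcond x hx
      have h2 : ‖A x‖ ^ 2 = l * ‖x‖ ^ 2 := by
        have := hquad x hx
        rw [h1, inner_smul_left, real_inner_self_eq_norm_sq] at this
        simp only [map_neg, RCLike.star_def, conj_trivial] at this
        nlinarith
      have : ‖A x‖ = Real.sqrt l * ‖x‖ := by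
        rw [show Real.sqrt l * ‖x‖ = Real.sqrt (l * ‖x‖ ^ 2) by
          rw [Real.sqrt_mul hl0, Real.sqrt_sq (norm_nonneg x)]]
        rw [← h2, Real.sqrt_sq (norm_nonneg _)]
      exact this
    · rw [Real.cos_arccos (le_trans (by norm_num) (Real.sqrt_nonneg l)) (Real.sqrt_le_one.mpr hl1), Real.sq_sqrt hl0]
  constructor
  · constructor
    · intro ⟨l, hl, hcond⟩
      obtain ⟨θ, hθ, h1, _⟩ := part2 l hl hcond
      exact ⟨θ, hθ, h1⟩
    · -- backward direction
      rintro ⟨θ, hθ, hnorm⟩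
      refine ⟨Real.cos θ ^ 2, ⟨by positivity, ?_⟩, ?_⟩
      · have := Real.cos_le_one θ
        have h0 : 0 ≤ Real.cos θ := Real.cos_nonneg_of_mem_Icc
          ⟨by linarith [hθ.1, Real.pi_pos], hθ.2⟩
        nlinarith
      · intro x hx
        set l := Real.cos θ ^ 2 with hl
        rw [hPTA, hPTA]
        -- define S x = A (A x) + l • x, show S x = 0
        have hSquad : ∀ z ∈ D, ⟪A (A z) + l • z, z⟫ = 0 := by
          intro z hz
          rw [inner_add_left, hquad z hz, inner_smul_left]
          have : ‖A z‖ = Real.cos θ * ‖z‖ := hnorm z hz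
          simp only [RCLike.star_def, conj_trivial, real_inner_self_eq_norm_sq]
          rw [this]; ring
        -- symmetry
        have hsymm : ∀ z w : V, z ∈ D → w ∈ D →
            ⟪A (A z) + l • z, w⟫ = ⟪A (A w) + l • w, z⟫ := by
          intro z w hz hw
          rw [inner_add_left, inner_add_left, hkey z w hz hw, hkey w z hw hz,
            real_inner_comm (A z) (A w), inner_smul_left, inner_smul_left,
            real_inner_comm z w]
        -- polarization
        have hSzero : ∀ z w : V, z ∈ D → w ∈ D → ⟪A (A z) + l • z, w⟫ = 0 := by
          intro z w hz hw
          have hzw : z + w ∈ D := D.add_mem hz hw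
          have hexp := hSquad (z + w) hzw
          have hAzw : A (A (z + w)) = A (A z) + A (A w) := by
            rw [hAadd z w, hAadd]
          rw [hAzw, smul_add] at hexp
          have e1 := hSquad z hz
          have e2 := hSquad w hw
          have e3 := hsymm z w hz hw
          have expand : ⟪A (A z) + A (A w) + (l • z + l • w), z + w⟫ =
              ⟪A (A z) + l • z, z⟫ + ⟪A (A z) + l • z, w⟫ +
              ⟪A (A w) + l • w, z⟫ + ⟪A (A w) + l • w, w⟫ := by
            simp only [inner_add_left, inner_add_right]; ring
          rw [expand, e1, e2, e3] at hexp
          linarith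
        have hmem : A (A x) + l • x ∈ D := D.add_mem (hAmem _) (D.smul_mem _ hx)
        have := hSzero x _ hx hmem
        rw [inner_self_eq_zero] at this
        rw [neg_smul]
        exact eq_neg_of_add_eq_zero_left this
  · exact part2
end

section
/- If W is pointwise slant with slant angle θ ∈ [0, π/2], then ⟨F x, F y⟩ = (sin² θ)·⟨x, y⟩ for all x, y ∈ W; in particular ‖F x‖ = (sin θ)·‖x‖ for every x ∈ W. -/
open Real RealInnerProductSpace

/-- If `W` is pointwise slant with slant angle `θ ∈ [0, π/2]`, then
`⟨F x, F y⟩ = (sin² θ)·⟨x, y⟩` for all `x, y ∈ W`; in particular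
`‖F x‖ = (sin θ)·‖x‖` for every `x ∈ W`. -/
theorem inner_F_F_of_pointwise_slant
    {V : Type*} [NormedAddCommGroup V] [InnerProductSpace ℝ V]
    (J : V →ₗᵢ[ℝ] V) (hJsurj : Function.Surjective J)
    (hJ2 : ∀ x : V, J (J x) = -x)
    (W : Submodule ℝ V) [FiniteDimensional ℝ W]
    (T F : V → V) (hT : ∀ x : V, T x = (Submodule.orthogonalProjection W (J x) : V))
    (hF : ∀ x : V, F x = J x - T x)
    (θ : ℝ) (hθ : θ ∈ Set.Icc 0 (π / 2))
    (hslant : ∀ x ∈ W, ‖T x‖ = Real.cos θ * ‖x‖) :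
    (∀ x ∈ W, ∀ y ∈ W, ⟪F x, F y⟫ = Real.sin θ ^ 2 * ⟪x, y⟫) ∧
      (∀ x ∈ W, ‖F x‖ = Real.sin θ * ‖x‖) := by
  -- F x is orthogonal to W
  have hFmem : ∀ x : V, F x ∈ Wᗮ := by
    intro x
    rw [hF, hT]
    exact W.sub_starProjection_mem_orthogonal (J x)
  have hTmem : ∀ x : V, T x ∈ W := by
    intro x; rw [hT]; exact (Submodule.orthogonalProjection W (J x)).2
  -- T is additive
  have hTadd : ∀ x y : V, T (x + y) = T x + T y := by
    intro x y; simp [hT, map_add]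
  -- inner T T
  have hTT : ∀ x ∈ W, ∀ y ∈ W, ⟪T x, T y⟫ = Real.cos θ ^ 2 * ⟪x, y⟫ := by
    intro x hx y hy
    have h1 : ‖T (x + y)‖ ^ 2 = Real.cos θ ^ 2 * ‖x + y‖ ^ 2 := by
      rw [hslant _ (W.add_mem hx hy)]; ring
    have h2 : ‖T x‖ ^ 2 = Real.cos θ ^ 2 * ‖x‖ ^ 2 := by
      rw [hslant _ hx]; ring
    have h3 : ‖T y‖ ^ 2 = Real.cos θ ^ 2 * ‖y‖ ^ 2 := by
      rw [hslant _ hy]; ring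
    have e1 : ‖T (x + y)‖ ^ 2 = ‖T x‖ ^ 2 + 2 * ⟪T x, T y⟫ + ‖T y‖ ^ 2 := by
      rw [hTadd]
      rw [@norm_add_sq_real]
    have e2 : ‖x + y‖ ^ 2 = ‖x‖ ^ 2 + 2 * ⟪x, y⟫ + ‖y‖ ^ 2 := by
      rw [@norm_add_sq_real]
    nlinarith [e1, e2, h1, h2, h3]
  have key : ∀ x ∈ W, ∀ y ∈ W, ⟪F x, F y⟫ = Real.sin θ ^ 2 * ⟪x, y⟫ := by
    intro x hx y hy
    have hJ : ⟪J x, J y⟫ = ⟪x, y⟫ := J.inner_map_map x y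
    have h1 : ⟪F x, T y⟫ = 0 := by
      rw [real_inner_comm]; exact (hFmem x) (T y) (hTmem y)
    have h2' : ⟪T x, F y⟫ = 0 := (hFmem y) (T x) (hTmem x)
    have hdecx : J x = T x + F x := by rw [hF]; abel
    have hdecy : J y = T y + F y := by rw [hF]; abel
    have expand : ⟪x, y⟫ = ⟪T x, T y⟫ + ⟪F x, F y⟫ := by
      rw [← hJ, hdecx, hdecy, inner_add_left, inner_add_right, inner_add_right,
        h1, h2']
      ring
    have := hTT x hx y hy
    have hs : Real.sin θ ^ 2 = 1 - Real.cos θ ^ 2 := by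
      have := Real.sin_sq_add_cos_sq θ; linarith
    rw [hs]; linarith [expand, this]
  refine ⟨key, ?_⟩
  intro x hx
  have h := key x hx x hx
  rw [real_inner_self_eq_norm_sq, real_inner_self_eq_norm_sq] at h
  have hsin : 0 ≤ Real.sin θ := Real.sin_nonneg_of_nonneg_of_le_pi hθ.1
    (le_trans hθ.2 (by linarith [Real.pi_pos]))
  have hsq : ‖F x‖ ^ 2 = (Real.sin θ * ‖x‖) ^ 2 := by rw [h]; ring
  have habs := (sq_eq_sq_iff_abs_eq_abs _ _).mp hsq
  rwa [abs_of_nonneg (norm_nonneg _), abs_of_nonneg (mul_nonneg hsin (norm_nonneg x))] at habs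
end

section
/- Suppose in addition that ‖P₁(J x)‖ = (cos θ₁)·‖x‖ for every x ∈ D₁ and ‖P₂(J z)‖ = (cos θ₂)·‖z‖ for every z ∈ D₂, where θ₁, θ₂ ∈ [0, π/2] (i.e., D₁ and D₂ are pointwise slant with slant angles θ₁ and θ₂, making W pointwise bi-slant). Then T(T x) = -(cos² θ₁)·x for every x ∈ D₁ and T(T z) = -(cos² θ₂)·z for every z ∈ D₂. -/
open Real RealInnerProductSpace

lemma Jskew {V : Type*} [NormedAddCommGroup V] [InnerProductSpace ℝ V]
    (J : V →ₗᵢ[ℝ] V) (hJ2 : ∀ x : V, J (J x) = -x) (a b : V) :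
    ⟪J a, b⟫ = -⟪a, J b⟫ := by
  have h := J.inner_map_map a (J b)
  rw [hJ2, inner_neg_right] at h
  linarith

lemma aux_T_sq {V : Type*} [NormedAddCommGroup V] [InnerProductSpace ℝ V]
    (J : V →ₗᵢ[ℝ] V) (hJ2 : ∀ x : V, J (J x) = -x)
    (W D : Submodule ℝ V) [FiniteDimensional ℝ W] [FiniteDimensional ℝ D]
    (_hDW : D ≤ W)
    (hproj : ∀ x ∈ D, (W.orthogonalProjectionOnto (J x) : V) = (D.orthogonalProjectionOnto (J x) : V))
    (θ : ℝ)
    (hslant : ∀ x ∈ D, ‖(D.orthogonalProjectionOnto (J x) : V)‖ = Real.cos θ * ‖x‖)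
    (T : V → V) (hT : ∀ x : V, T x = (W.orthogonalProjectionOnto (J x) : V)) :
    ∀ x ∈ D, T (T x) = (-(Real.cos θ ^ 2)) • x := by
  set P : V → V := fun v => (D.orthogonalProjectionOnto (J v) : V) with hP
  have hPmem : ∀ v : V, P v ∈ D := fun v => (D.orthogonalProjectionOnto (J v)).2
  have hTP : ∀ x ∈ D, T x = P x := by
    intro x hx; rw [hT, hproj x hx]
  -- inner products with elements of D see only P
  have hPD : ∀ (v : V), ∀ w ∈ D, ⟪J v, w⟫ = ⟪P v, w⟫ := by
    intro v w hw
    have := Submodule.starProjection_inner_eq_zero (K := D) (J v) w hw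
    rw [Submodule.starProjection_apply] at this
    rw [inner_sub_left] at this
    linarith
  -- P is additive on all of V
  have hPadd : ∀ u v : V, P (u + v) = P u + P v := by
    intro u v
    simp [hP, map_add]
  -- polarization: ⟪P x, P y⟫ = cos²θ ⟪x, y⟫ on D
  have hpol : ∀ x ∈ D, ∀ y ∈ D, ⟪P x, P y⟫ = Real.cos θ ^ 2 * ⟪x, y⟫ := by
    intro x hx y hy
    have h1 := real_inner_eq_norm_add_mul_self_sub_norm_mul_self_sub_norm_mul_self_div_two (P x) (P y)
    have h2 := real_inner_eq_norm_add_mul_self_sub_norm_mul_self_sub_norm_mul_self_div_two x y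
    rw [← hPadd] at h1
    rw [hslant x hx, hslant y hy, hslant (x + y) (D.add_mem hx hy)] at h1
    rw [h1, h2]; ring
  intro x hx
  rw [hTP x hx, hTP (P x) (hPmem x)]
  -- show P (P x) + cos²θ • x = 0
  have hmem : P (P x) + (Real.cos θ ^ 2) • x ∈ D :=
    D.add_mem (hPmem _) (D.smul_mem _ hx)
  have hzero : ∀ y ∈ D, ⟪P (P x) + (Real.cos θ ^ 2) • x, y⟫ = 0 := by
    intro y hy
    have e1 : ⟪P (P x), y⟫ = ⟪J (P x), y⟫ := (hPD (P x) y hy).symm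
    have e2 : ⟪J (P x), y⟫ = -⟪P x, J y⟫ := Jskew J hJ2 _ _
    have e3 : ⟪P x, J y⟫ = ⟪P x, P y⟫ := by
      rw [real_inner_comm (J y) (P x), real_inner_comm (P y) (P x)]
      exact hPD y (P x) (hPmem x)
    rw [inner_add_left, e1, e2, e3, hpol x hx y hy, inner_smul_left]
    simp
  have : P (P x) + (Real.cos θ ^ 2) • x = 0 := by
    have h := hzero _ hmem
    rwa [inner_self_eq_zero] at h
  have := eq_neg_of_add_eq_zero_left this
  rw [this]; module
lemma proj_sup_eq {V : Type*} [NormedAddCommGroup V] [InnerProductSpace ℝ V]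
    (W D D' : Submodule ℝ V) [FiniteDimensional ℝ W] [FiniteDimensional ℝ D]
    (hW : W = D ⊔ D') (v : V)
    (hvD' : ∀ z ∈ D', ⟪v, z⟫ = 0)
    (hDD' : ∀ x ∈ D, ∀ z ∈ D', ⟪x, z⟫ = 0) :
    (W.orthogonalProjectionOnto v : V) = (D.orthogonalProjectionOnto v : V) := by
  rw [← Submodule.starProjection_apply, ← Submodule.starProjection_apply]
  apply Submodule.eq_starProjection_of_mem_of_inner_eq_zero
  · have : D ≤ W := hW ▸ le_sup_left
    exact this (D.starProjection_apply_mem v)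
  · intro w hw
    rw [hW, Submodule.mem_sup] at hw
    obtain ⟨a, ha, b, hb, rfl⟩ := hw
    rw [inner_add_right, Submodule.starProjection_inner_eq_zero v a ha, inner_sub_left,
      hvD' b hb, hDD' _ (D.starProjection_apply_mem v) b hb]
    ring

/-- Suppose the pointwise bi-slant decomposition `W = D₁ ⊕ D₂` has
`‖P₁ (J x)‖ = (cos θ₁)·‖x‖` on `D₁` and `‖P₂ (J z)‖ = (cos θ₂)·‖z‖` on `D₂` with
`θ₁, θ₂ ∈ [0, π/2]`.  Then `T (T x) = -(cos² θ₁) • x` for every `x ∈ D₁` and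
`T (T z) = -(cos² θ₂) • z` for every `z ∈ D₂`. -/
theorem T_sq_on_bi_slant_distributions
    {V : Type*} [NormedAddCommGroup V] [InnerProductSpace ℝ V]
    (J : V →ₗᵢ[ℝ] V) (hJsurj : Function.Surjective J)
    (hJ2 : ∀ x : V, J (J x) = -x)
    (W : Submodule ℝ V) [FiniteDimensional ℝ W]
    (T : V → V) (hT : ∀ x : V, T x = (W.orthogonalProjectionOnto (J x) : V))
    (D₁ D₂ : Submodule ℝ V) [FiniteDimensional ℝ D₁] [FiniteDimensional ℝ D₂]
    (hW : W = D₁ ⊔ D₂)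
    (horth : ∀ x ∈ D₁, ∀ z ∈ D₂, ⟪x, z⟫ = 0)
    (hJ12 : ∀ x ∈ D₁, ∀ z ∈ D₂, ⟪J x, z⟫ = 0)
    (hJ21 : ∀ z ∈ D₂, ∀ x ∈ D₁, ⟪J z, x⟫ = 0)
    (θ₁ θ₂ : ℝ) (hθ₁ : θ₁ ∈ Set.Icc 0 (π / 2)) (hθ₂ : θ₂ ∈ Set.Icc 0 (π / 2))
    (hslant₁ : ∀ x ∈ D₁, ‖(D₁.orthogonalProjectionOnto (J x) : V)‖ = Real.cos θ₁ * ‖x‖)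
    (hslant₂ : ∀ z ∈ D₂, ‖(D₂.orthogonalProjectionOnto (J z) : V)‖ = Real.cos θ₂ * ‖z‖) :
    (∀ x ∈ D₁, T (T x) = (-(Real.cos θ₁ ^ 2)) • x) ∧
      (∀ z ∈ D₂, T (T z) = (-(Real.cos θ₂ ^ 2)) • z) := by
  have hW' : W = D₂ ⊔ D₁ := by rw [hW, sup_comm]
  constructor
  · refine aux_T_sq J hJ2 W D₁ (hW ▸ le_sup_left) ?_ θ₁ hslant₁ T hT
    intro x hx
    exact proj_sup_eq W D₁ D₂ hW (J x) (hJ12 x hx) horth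
  · refine aux_T_sq J hJ2 W D₂ (hW' ▸ le_sup_left) ?_ θ₂ hslant₂ T hT
    intro z hz
    refine proj_sup_eq W D₂ D₁ hW' (J z) (hJ21 z hz) ?_
    intro a ha b hb
    rw [real_inner_comm]
    exact horth b hb a ha
end
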